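/- For a nilpotent shift matrix A of size (n+1)×(n+1) (A e_i = e_{i-1}), the matrix exponential satisfies exp(Σ_{l=1}^{n} t_l A^l) = Σ_{l=0}^{n} p_l(t_1,...,t_n) A^l, where p_l are the elementary Schur polynomials defined by exp(Σ_{i≥1} t_i z^i) = Σ_{k≥0} p_k(t) z^k. -/

import Mathlib

/-- The exponential of a nilpotent matrix (`M^d = 0`) as the finite sum
`Σ_{j<d} M^j / j!`. -/
noncomputable def nilpExp {m : ℕ} (d : ℕ) (M : Matrix (Fin m) (Fin m) ℝ) :
    Matrix (Fin m) (Fin m) ℝ :=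
  ∑ j ∈ Finset.range d, ((j.factorial : ℝ)⁻¹) • M ^ j

/-- The formal power series `Σ_{i≥1} t_i z^i`. -/
noncomputable def tSeries (t : ℕ → ℝ) : PowerSeries ℝ :=
  PowerSeries.mk fun i => if i = 0 then 0 else t i

lemma shift_pow (n l : ℕ) :
    (Matrix.of fun i j : Fin (n + 1) =>
      if (i : ℕ) + 1 = (j : ℕ) then (1 : ℝ) else 0) ^ l =
    Matrix.of (fun i j : Fin (n + 1) =>
      if (i : ℕ) + l = (j : ℕ) then (1 : ℝ) else 0) := by
  induction l with
  | zero =>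
    ext i j
    simp [Matrix.one_apply, Fin.ext_iff, eq_comm]
  | succ l ih =>
    rw [pow_succ, ih]
    ext i j
    rw [Matrix.mul_apply]
    simp only [Matrix.of_apply]
    rcases Nat.lt_or_ge ((i : ℕ) + l) (n + 1) with h | h
    · rw [Finset.sum_eq_single (⟨(i : ℕ) + l, h⟩ : Fin (n + 1))]
      · simp [add_assoc]
      · intro b _ hb
        rw [if_neg, zero_mul]
        intro hc
        exact hb (Fin.ext hc.symm)
      · simp
    · rw [Finset.sum_eq_zero, if_neg (by omega)]
      intro b _
      rw [if_neg (by omega), zero_mul]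

lemma shift_pow_zero (n l : ℕ) (hl : n < l) :
    (Matrix.of fun i j : Fin (n + 1) =>
      if (i : ℕ) + 1 = (j : ℕ) then (1 : ℝ) else 0) ^ l = 0 := by
  rw [shift_pow]
  ext i j
  simp only [Matrix.of_apply, Matrix.zero_apply]
  rw [if_neg (by omega)]

lemma coeff_mul_congr {f f' g g' : PowerSeries ℝ} {n : ℕ}
    (hf : ∀ k ≤ n, PowerSeries.coeff k f = PowerSeries.coeff k f')
    (hg : ∀ k ≤ n, PowerSeries.coeff k g = PowerSeries.coeff k g') :
    ∀ k ≤ n, PowerSeries.coeff k (f * g) = PowerSeries.coeff k (f' * g') := by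
  intro k hk
  rw [PowerSeries.coeff_mul, PowerSeries.coeff_mul]
  refine Finset.sum_congr rfl fun ab hab => ?_
  rw [Finset.HasAntidiagonal.mem_antidiagonal] at hab
  rw [hf _ (by omega), hg _ (by omega)]

lemma coeff_pow_congr {f g : PowerSeries ℝ} {n : ℕ}
    (hf : ∀ k ≤ n, PowerSeries.coeff k f = PowerSeries.coeff k g) (j : ℕ) :
    ∀ k ≤ n, PowerSeries.coeff k (f ^ j) = PowerSeries.coeff k (g ^ j) := by
  induction j with
  | zero => intro k hk; simp
  | succ j ih =>
    rw [pow_succ, pow_succ]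
    exact coeff_mul_congr ih hf

lemma coeff_pow_eq_zero {f : PowerSeries ℝ} (h0 : PowerSeries.constantCoeff f = 0)
    (j : ℕ) : ∀ k < j, PowerSeries.coeff k (f ^ j) = 0 := by
  induction j with
  | zero => intro k hk; omega
  | succ j ih =>
    intro k hk
    rw [pow_succ, PowerSeries.coeff_mul]
    refine Finset.sum_eq_zero fun ab hab => ?_
    rw [Finset.HasAntidiagonal.mem_antidiagonal] at hab
    rcases Nat.lt_or_ge ab.1 j with h | h
    · rw [ih _ h, zero_mul]
    · have hab2 : ab.2 = 0 := by omega
      rw [hab2, PowerSeries.coeff_zero_eq_constantCoeff, h0, mul_zero]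

/-- for the `(n+1)×(n+1)` shift matrix `A` (so `A^{n+1} = 0`),
the matrix exponential satisfies
`exp(Σ_{l=1}^n t_l A^l) = Σ_{l=0}^n p_l(t) A^l`,
where the elementary Schur polynomials `p_k` are the coefficients of
`exp(Σ_{i≥1} t_i z^i) = Σ_{k≥0} p_k(t) z^k`, i.e.
`p k = Σ_j (1/j!)·(coefficient of z^k in (Σ_{i≥1} t_i z^i)^j)`. -/
theorem exp_shift_schur (n : ℕ) (t : ℕ → ℝ) (p : ℕ → ℝ)
    (hp : ∀ k, p k = ∑ j ∈ Finset.range (k + 1),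
      (j.factorial : ℝ)⁻¹ * PowerSeries.coeff k ((tSeries t) ^ j)) :
    nilpExp (n + 1)
        (∑ l ∈ Finset.Icc 1 n, t l •
          (Matrix.of fun i j : Fin (n + 1) =>
            if (i : ℕ) + 1 = (j : ℕ) then (1 : ℝ) else 0) ^ l)
      = ∑ l ∈ Finset.range (n + 1), p l •
          (Matrix.of fun i j : Fin (n + 1) =>
            if (i : ℕ) + 1 = (j : ℕ) then (1 : ℝ) else 0) ^ l := by
  set A : Matrix (Fin (n + 1)) (Fin (n + 1)) ℝ :=
    Matrix.of fun i j : Fin (n + 1) =>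
      if (i : ℕ) + 1 = (j : ℕ) then (1 : ℝ) else 0 with hA
  have hA0 : ∀ i, n < i → A ^ i = 0 := fun i hi => shift_pow_zero n i hi
  set q : Polynomial ℝ := ∑ l ∈ Finset.Icc 1 n, Polynomial.C (t l) * Polynomial.X ^ l
    with hqdef
  -- coefficients of q
  have hqc : ∀ k ≤ n, PowerSeries.coeff k (q : PowerSeries ℝ) =
      PowerSeries.coeff k (tSeries t) := by
    intro k hk
    rw [Polynomial.coeff_coe, hqdef, Polynomial.finset_sum_coeff]
    simp only [Polynomial.coeff_C_mul, Polynomial.coeff_X_pow, mul_ite, mul_one, mul_zero]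
    rw [Finset.sum_ite_eq (Finset.Icc 1 n) k t]
    rw [tSeries, PowerSeries.coeff_mk]
    by_cases h0 : k = 0
    · simp [h0]
    · rw [if_pos (by simp; omega), if_neg h0]
  have hq0 : PowerSeries.constantCoeff (tSeries t) = 0 := by
    rw [tSeries, ← PowerSeries.coeff_zero_eq_constantCoeff, PowerSeries.coeff_mk]
    simp
  -- the two polynomials
  set f : Polynomial ℝ :=
    ∑ j ∈ Finset.range (n + 1), Polynomial.C ((j.factorial : ℝ)⁻¹) * q ^ j with hfdef
  set g : Polynomial ℝ :=
    ∑ l ∈ Finset.range (n + 1), Polynomial.C (p l) * Polynomial.X ^ l with hgdef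
  have hfg : ∀ k ≤ n, f.coeff k = g.coeff k := by
    intro k hk
    have hgk : g.coeff k = p k := by
      rw [hgdef, Polynomial.finset_sum_coeff]
      simp only [Polynomial.coeff_C_mul, Polynomial.coeff_X_pow, mul_ite, mul_one, mul_zero]
      rw [Finset.sum_ite_eq (Finset.range (n + 1)) k p, if_pos (Finset.mem_range.mpr (by omega))]
    have hfk : f.coeff k =
        ∑ j ∈ Finset.range (n + 1), (j.factorial : ℝ)⁻¹ * (q ^ j).coeff k := by
      rw [hfdef, Polynomial.finset_sum_coeff]
      simp [Polynomial.coeff_C_mul]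
    rw [hfk, hgk, hp k]
    have hext : ∑ j ∈ Finset.range (k + 1),
        (j.factorial : ℝ)⁻¹ * PowerSeries.coeff k ((tSeries t) ^ j)
        = ∑ j ∈ Finset.range (n + 1),
        (j.factorial : ℝ)⁻¹ * PowerSeries.coeff k ((tSeries t) ^ j) := by
      refine Finset.sum_subset (by intro x hx; simp only [Finset.mem_range] at hx ⊢; omega) ?_
      intro j hj hj'
      simp only [Finset.mem_range] at hj hj'
      rw [coeff_pow_eq_zero hq0 j k (by omega), mul_zero]
    rw [hext]
    refine Finset.sum_congr rfl fun j _ => ?_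
    congr 1
    rw [← coeff_pow_congr hqc j k hk, ← Polynomial.coe_pow, Polynomial.coeff_coe]
  -- evaluate
  have hS : Polynomial.aeval A q = ∑ l ∈ Finset.Icc 1 n, t l • A ^ l := by
    rw [hqdef, map_sum]
    refine Finset.sum_congr rfl fun l _ => ?_
    rw [map_mul, Polynomial.aeval_C, map_pow, Polynomial.aeval_X, Algebra.smul_def]
  have hLHS : nilpExp (n + 1) (∑ l ∈ Finset.Icc 1 n, t l • A ^ l) = Polynomial.aeval A f := by
    rw [nilpExp, hfdef, map_sum]
    refine Finset.sum_congr rfl fun j _ => ?_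
    rw [map_mul, Polynomial.aeval_C, map_pow, hS, Algebra.smul_def]
  have hRHS : (∑ l ∈ Finset.range (n + 1), p l • A ^ l) = Polynomial.aeval A g := by
    rw [hgdef, map_sum]
    refine Finset.sum_congr rfl fun l _ => ?_
    rw [map_mul, Polynomial.aeval_C, map_pow, Polynomial.aeval_X, Algebra.smul_def]
  rw [hLHS, hRHS]
  set N : ℕ := max f.natDegree g.natDegree + 1 with hN
  rw [Polynomial.aeval_eq_sum_range' (n := N) (by omega) A,
    Polynomial.aeval_eq_sum_range' (n := N) (by omega) A]
  refine Finset.sum_congr rfl fun i _ => ?_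
  rcases Nat.lt_or_ge n i with h | h
  · rw [hA0 i h, smul_zero, smul_zero]
  · rw [hfg i h]
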